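/- arXiv:2005.10571 — 3 statements merged into one kernel-verified Lean document; each statement's English description precedes it below -/
import Mathlib

section
/- For a d-dimensional vector of independent Rademacher variables W, setting R = W/√d, for every x ∈ ℝᵈ we have P((Rᵀx)² ≥ ‖x‖₂²/(2d)) ≥ 1/28. -/
open MeasureTheory ProbabilityTheory

lemma integrable_dirac'' {f : ℝ → ℝ} (hf : Measurable f) (a : ℝ) : Integrable f (Measure.dirac a) :=
  ⟨hf.aestronglyMeasurable, by
    rw [HasFiniteIntegral, lintegral_dirac]; exact ENNReal.coe_lt_top⟩

lemma nu_moment (n : ℕ) : ∫ y : ℝ, y ^ n ∂((2⁻¹ : ENNReal) • Measure.dirac (1 : ℝ) + (2⁻¹ : ENNReal) • Measure.dirac (-1 : ℝ)) = if Even n then 1 else 0 := by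
  rw [integral_add_measure, integral_smul_measure, integral_smul_measure, integral_dirac, integral_dirac]
  · rcases Nat.even_or_odd n with h | h
    · simp only [h, if_true, Even.neg_pow h, one_pow]
      norm_num [ENNReal.toReal_inv]
    · simp only [Nat.not_even_iff_odd.mpr h, if_false, Odd.neg_pow h, one_pow]
      rw [smul_eq_mul, smul_eq_mul]; ring
  · exact (integrable_dirac'' (by fun_prop) _).smul_measure (by simp)
  · exact (integrable_dirac'' (by fun_prop) _).smul_measure (by simp)

lemma indep_prod_integral {Ω : Type*} [MeasurableSpace Ω] (μ : Measure Ω) [IsProbabilityMeasure μ]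
    {d : ℕ} (W : Ω → Fin d → ℝ) (hWmeas : ∀ i, Measurable fun ω => W ω i)
    (hWindep : iIndepFun (fun i ω => W ω i) μ)
    (g : Fin d → ℝ → ℝ) (hg : ∀ i, Measurable (g i)) (s : Finset (Fin d)) :
    ∫ ω, ∏ i ∈ s, g i (W ω i) ∂μ = ∏ i ∈ s, ∫ ω, g i (W ω i) ∂μ := by
  have hindep : iIndepFun (fun i ω => g i (W ω i)) μ :=
    hWindep.comp g hg
  have hmeas : ∀ i, Measurable fun ω => g i (W ω i) := fun i => (hg i).comp (hWmeas i)
  induction s using Finset.cons_induction with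
  | empty => simp
  | cons a s ha ih =>
    rw [Finset.prod_cons]
    have hip : IndepFun (∏ j ∈ s, fun ω => g j (W ω j)) (fun ω => g a (W ω a)) μ :=
      hindep.indepFun_finset_prod_of_notMem hmeas ha
    have : ∫ ω, g a (W ω a) * ∏ i ∈ s, g i (W ω i) ∂μ
        = (∫ ω, g a (W ω a) ∂μ) * ∫ ω, ∏ i ∈ s, g i (W ω i) ∂μ := by
      have := hip.symm.integral_mul_eq_mul_integral (hmeas a).aestronglyMeasurable
        (by rw [Finset.prod_fn]; exact (Finset.measurable_prod s (fun i _ => hmeas i)).aestronglyMeasurable)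
      simpa [Finset.prod_fn, Pi.mul_apply, integral, Pi.mul_def] using this
    rw [show (fun ω => ∏ i ∈ Finset.cons a s ha, g i (W ω i)) = fun ω => g a (W ω a) * ∏ i ∈ s, g i (W ω i) from by
        funext ω; rw [Finset.prod_cons], this, ih]

lemma pairing {α : Type*} [DecidableEq α] (i j k l : α)
    (h : ∀ m : α, Even ((if i = m then 1 else 0) + (if j = m then 1 else 0)
      + (if k = m then 1 else 0) + (if l = m then 1 else 0) : ℕ)) :
    (i = j ∧ k = l) ∨ (i = k ∧ j = l) ∨ (i = l ∧ j = k) := by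
  have hi := h i
  have hj := h j
  have hk := h k
  simp only [Nat.even_iff] at hi hj hk
  by_cases h1 : j = i <;> by_cases h2 : k = i <;> by_cases h3 : l = i <;>
    by_cases h4 : k = j <;> by_cases h5 : l = j <;> by_cases h6 : l = k <;>
    simp_all <;> omega

/-- For a `d`-dimensional vector `W` of independent Rademacher variables, with `R = W/√d`,
for every `x ∈ ℝᵈ` we have `P((Rᵀx)² ≥ ‖x‖₂²/(2d)) ≥ 1/28`. -/
theorem rademacher_paley_zygmund
    {Ω : Type*} [MeasurableSpace Ω] (μ : Measure Ω) [IsProbabilityMeasure μ]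
    {d : ℕ} (hd : 1 ≤ d) (W : Ω → Fin d → ℝ)
    (hWmeas : ∀ i, Measurable fun ω => W ω i)
    (hWdist : ∀ i, Measure.map (fun ω => W ω i) μ
      = (2⁻¹ : ENNReal) • Measure.dirac (1 : ℝ) + (2⁻¹ : ENNReal) • Measure.dirac (-1 : ℝ))
    (hWindep : iIndepFun (fun i ω => W ω i) μ)
    (x : Fin d → ℝ) :
    (1 / 28 : ENNReal)
      ≤ μ {ω | (∑ i, (x i) ^ 2) / (2 * d)
          ≤ ((1 / Real.sqrt d) * ∑ i, W ω i * x i) ^ 2} := by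
  set σ2 : ℝ := ∑ i, (x i) ^ 2 with hσ2
  set S : Ω → ℝ := fun ω => ∑ i, W ω i * x i with hSdef
  have hSmeas : Measurable S := by
    apply Finset.measurable_sum
    intro i _
    exact (hWmeas i).mul_const _
  have hdpos : (0 : ℝ) < d := by exact_mod_cast hd
  -- rewrite the set
  have hset : {ω | σ2 / (2 * d) ≤ ((1 / Real.sqrt d) * S ω) ^ 2}
      = {ω | σ2 / 2 ≤ S ω ^ 2} := by
    ext ω
    have hsq : ((1 / Real.sqrt d) * S ω) ^ 2 = S ω ^ 2 / d := by
      rw [mul_pow, div_pow, one_pow, Real.sq_sqrt hdpos.le]; ring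
    simp only [Set.mem_setOf_eq, hsq]
    rw [div_le_div_iff₀ (by positivity) hdpos, div_le_iff₀ (by norm_num : (0:ℝ) < 2)]
    constructor
    · intro h; nlinarith
    · intro h; nlinarith
  rw [hset]
  -- trivial case
  rcases le_or_gt σ2 0 with hσ0 | hσpos
  · have hσz : σ2 = 0 := le_antisymm hσ0 (by positivity)
    have : {ω | σ2 / 2 ≤ S ω ^ 2} = Set.univ := by
      ext ω
      simp only [Set.mem_setOf_eq, Set.mem_univ, iff_true, hσz, zero_div]
      positivity
    rw [this]
    simp only [measure_univ]
    exact le_of_lt (by norm_num : (1/28 : ENNReal) < 1)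
  -- moments of single coordinates
  have hmom : ∀ (i : Fin d) (n : ℕ), ∫ ω, (W ω i) ^ n ∂μ = if Even n then 1 else 0 := by
    intro i n
    have h1 : ∫ y : ℝ, y ^ n ∂(Measure.map (fun ω => W ω i) μ) = ∫ ω, (W ω i) ^ n ∂μ :=
      integral_map (hWmeas i).aemeasurable (by fun_prop)
    rw [← h1, hWdist i, nu_moment]
  -- a.e. boundedness
  have hae : ∀ᵐ ω ∂μ, ∀ i, |W ω i| = 1 := by
    rw [ae_all_iff]
    intro i
    have hms : MeasurableSet {y : ℝ | |y| = 1} := by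
      have : {y : ℝ | |y| = 1} = (fun y : ℝ => |y|) ⁻¹' {1} := rfl
      rw [this]; exact (measurable_abs) (measurableSet_singleton 1)
    have h0 : μ ((fun ω => W ω i) ⁻¹' {y : ℝ | |y| = 1}ᶜ) = 0 := by
      rw [← Measure.map_apply (hWmeas i) hms.compl, hWdist i]
      rw [Measure.coe_add, Pi.add_apply, Measure.smul_apply, Measure.smul_apply,
        Measure.dirac_apply' _ hms.compl, Measure.dirac_apply' _ hms.compl]
      have e1 : (1:ℝ) ∉ {y : ℝ | |y| = 1}ᶜ := by simp
      have e2 : (-1:ℝ) ∉ {y : ℝ | |y| = 1}ᶜ := by simp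
      rw [Set.indicator_of_notMem e1, Set.indicator_of_notMem e2]
      simp
    rw [ae_iff]
    exact h0
  -- integrability of quadruple products
  have hint4 : ∀ i j k l : Fin d, Integrable (fun ω => W ω i * W ω j * W ω k * W ω l) μ := by
    intro i j k l
    apply Integrable.mono' (integrable_const (1:ℝ))
      (((((hWmeas i).mul (hWmeas j)).mul (hWmeas k)).mul (hWmeas l)).aestronglyMeasurable)
    filter_upwards [hae] with ω hω
    simp only [Real.norm_eq_abs, Pi.mul_apply, abs_mul, hω, mul_one, le_refl]
  have hint2 : ∀ i j : Fin d, Integrable (fun ω => W ω i * W ω j) μ := by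
    intro i j
    apply Integrable.mono' (integrable_const (1:ℝ))
      (((hWmeas i).mul (hWmeas j)).aestronglyMeasurable)
    filter_upwards [hae] with ω hω
    simp only [Real.norm_eq_abs, Pi.mul_apply, abs_mul, hω, mul_one, le_refl]
  -- pairwise expectations
  have hEWW : ∀ i j : Fin d, ∫ ω, W ω i * W ω j ∂μ = if i = j then 1 else 0 := by
    intro i j
    by_cases hij : i = j
    · subst hij
      simp only [if_true]
      have := hmom i 2
      simpa [pow_two] using this
    · rw [if_neg hij]
      have hind : IndepFun (fun ω => W ω i) (fun ω => W ω j) μ := hWindep.indepFun hij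
      have hmul : ∫ ω, W ω i * W ω j ∂μ = (∫ ω, W ω i ∂μ) * ∫ ω, W ω j ∂μ :=
        hind.integral_mul_eq_mul_integral (hWmeas i).aestronglyMeasurable (hWmeas j).aestronglyMeasurable
      have h1 := hmom i 1
      simp only [pow_one] at h1
      rw [hmul, h1]
      simp
  -- second moment
  have hES2 : ∫ ω, S ω ^ 2 ∂μ = σ2 := by
    have hexp : ∀ ω, S ω ^ 2 = ∑ p : Fin d × Fin d, (W ω p.1 * W ω p.2) * (x p.1 * x p.2) := by
      intro ω
      rw [hSdef, pow_two, Finset.sum_mul_sum, ← Finset.sum_product']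
      apply Finset.sum_congr rfl
      intro p _
      ring
    simp only [hexp]
    rw [integral_finset_sum _ (fun p _ => (hint2 p.1 p.2).mul_const _)]
    have hterm : ∀ p : Fin d × Fin d, ∫ ω, (W ω p.1 * W ω p.2) * (x p.1 * x p.2) ∂μ
        = (if p.1 = p.2 then 1 else 0) * (x p.1 * x p.2) := by
      intro p
      rw [integral_mul_const, hEWW]
    simp only [hterm]
    rw [Fintype.sum_prod_type]
    simp only [ite_mul, one_mul, zero_mul, Finset.sum_ite_eq, Finset.mem_univ, if_true]
    show ∑ i, x i * x i = ∑ i, x i ^ 2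
    simp [pow_two]
  -- fourth moment of quadruples
  have hEW4 : ∀ i j k l : Fin d, ∫ ω, W ω i * W ω j * W ω k * W ω l ∂μ
      = if (∀ m : Fin d, Even ((if i = m then 1 else 0) + (if j = m then 1 else 0)
          + (if k = m then 1 else 0) + (if l = m then 1 else 0) : ℕ)) then 1 else 0 := by
    intro i j k l
    set c : Fin d → ℕ := fun m => (if i = m then 1 else 0) + (if j = m then 1 else 0)
      + (if k = m then 1 else 0) + (if l = m then 1 else 0) with hc
    have key : ∀ (ω : Ω) (p : Fin d), ∏ m, (W ω m) ^ (if p = m then (1:ℕ) else 0) = W ω p := by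
      intro ω p
      have h1 : ∀ m, (W ω m) ^ (if p = m then (1:ℕ) else 0) = if p = m then W ω m else 1 := by
        intro m; split_ifs <;> simp
      rw [Finset.prod_congr rfl fun m _ => h1 m, Finset.prod_ite_eq]
      simp
    have hprod : ∀ ω, W ω i * W ω j * W ω k * W ω l = ∏ m, (W ω m) ^ (c m) := by
      intro ω
      simp only [hc, pow_add, Finset.prod_mul_distrib, key]
    simp only [hprod]
    rw [indep_prod_integral μ W hWmeas hWindep (fun m y => y ^ (c m)) (fun m => by fun_prop) Finset.univ]
    have hm : ∀ m : Fin d, ∫ ω, (W ω m) ^ (c m) ∂μ = if Even (c m) then 1 else 0 :=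
      fun m => hmom m (c m)
    simp only [hm]
    by_cases hall : ∀ m : Fin d, Even (c m)
    · rw [if_pos hall]
      exact Finset.prod_eq_one fun m _ => by rw [if_pos (hall m)]
    · rw [if_neg hall]
      push_neg at hall
      obtain ⟨m, hm'⟩ := hall
      exact Finset.prod_eq_zero (Finset.mem_univ m) (by rw [if_neg hm'])
  -- generic nonnegativity of pairing terms
  have hT : ∀ a b c' e : Fin d, (0:ℝ) ≤ (if a = b then x a * x b else 0) * (if c' = e then x c' * x e else 0) := by
    intro a b c' e
    split_ifs with h1 h2 h2
    · subst h1; subst h2; exact mul_nonneg (mul_self_nonneg _) (mul_self_nonneg _)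
    all_goals simp
  -- fourth moment bound
  have hES4 : ∫ ω, S ω ^ 4 ∂μ ≤ 3 * σ2 ^ 2 := by
    have hexp : ∀ ω, S ω ^ 4 = ∑ q : (Fin d × Fin d) × (Fin d × Fin d),
        (W ω q.1.1 * W ω q.1.2 * W ω q.2.1 * W ω q.2.2) * (x q.1.1 * x q.1.2 * x q.2.1 * x q.2.2) := by
      intro ω
      have h2 : S ω ^ 2 = ∑ p : Fin d × Fin d, (W ω p.1 * x p.1) * (W ω p.2 * x p.2) := by
        rw [hSdef, pow_two, Finset.sum_mul_sum, ← Finset.sum_product']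
        rfl
      have h4 : S ω ^ 4 = S ω ^ 2 * S ω ^ 2 := by ring
      rw [h4, h2, Finset.sum_mul_sum, ← Finset.sum_product']
      apply Finset.sum_congr rfl
      intro q _
      ring
    simp only [hexp]
    rw [integral_finset_sum _ (fun q _ => (hint4 q.1.1 q.1.2 q.2.1 q.2.2).mul_const _)]
    have hterm : ∀ q : (Fin d × Fin d) × (Fin d × Fin d),
        ∫ ω, (W ω q.1.1 * W ω q.1.2 * W ω q.2.1 * W ω q.2.2) * (x q.1.1 * x q.1.2 * x q.2.1 * x q.2.2) ∂μ
        ≤ (if q.1.1 = q.1.2 then x q.1.1 * x q.1.2 else 0) * (if q.2.1 = q.2.2 then x q.2.1 * x q.2.2 else 0)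
          + (if q.1.1 = q.2.1 then x q.1.1 * x q.2.1 else 0) * (if q.1.2 = q.2.2 then x q.1.2 * x q.2.2 else 0)
          + (if q.1.1 = q.2.2 then x q.1.1 * x q.2.2 else 0) * (if q.1.2 = q.2.1 then x q.1.2 * x q.2.1 else 0) := by
      rintro ⟨⟨i, j⟩, k, l⟩
      rw [integral_mul_const, hEW4]
      simp only
      by_cases hall : (∀ m : Fin d, Even ((if i = m then 1 else 0) + (if j = m then 1 else 0)
          + (if k = m then 1 else 0) + (if l = m then 1 else 0) : ℕ))
      · rw [if_pos hall, one_mul]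
        rcases pairing i j k l hall with ⟨h1, h2⟩ | ⟨h1, h2⟩ | ⟨h1, h2⟩
        · subst h1; subst h2
          have n2 := hT i k i k
          have n3 := hT i k i k
          simp only [if_pos rfl, eq_self_iff_true, if_true]
          nlinarith [n2, n3]
        · subst h1; subst h2
          have n1 := hT i j i j
          have n3 := hT i j j i
          simp only [if_pos rfl, eq_self_iff_true, if_true]
          nlinarith [n1, n3]
        · subst h1; subst h2
          have n1 := hT i j i j
          have n2 := hT i j j i
          simp only [if_pos rfl, eq_self_iff_true, if_true]
          nlinarith [n1, n2]
      · rw [if_neg hall, zero_mul]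
        have n1 := hT i j k l
        have n2 := hT i k j l
        have n3 := hT i l j k
        nlinarith [n1, n2, n3]
    refine le_trans (Finset.sum_le_sum (fun q _ => hterm q)) ?_
    have hxx : ∑ i, x i * x i = σ2 := by
      show ∑ i, x i * x i = ∑ i, x i ^ 2
      simp [pow_two]
    have hdiag : ∑ p : Fin d × Fin d, (if p.1 = p.2 then x p.1 * x p.2 else 0) = σ2 := by
      rw [Fintype.sum_prod_type]
      simp only [Finset.sum_ite_eq, Finset.mem_univ, if_true]
      exact hxx
    rw [Finset.sum_add_distrib, Finset.sum_add_distrib]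
    have e1 : ∑ q : (Fin d × Fin d) × (Fin d × Fin d),
        (if q.1.1 = q.1.2 then x q.1.1 * x q.1.2 else 0) * (if q.2.1 = q.2.2 then x q.2.1 * x q.2.2 else 0)
        = σ2 * σ2 := by
      simp only [Fintype.sum_prod_type]
      have inner : ∀ i j : Fin d,
          (∑ k, ∑ l, (if i = j then x i * x j else 0) * (if k = l then x k * x l else 0))
          = (if i = j then x i * x j else 0) * σ2 := by
        intro i j
        simp only [← Finset.mul_sum]
        congr 1
        simp only [Finset.sum_ite_eq, Finset.mem_univ, if_true]
        exact hxx
      simp only [inner]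
      simp only [← Finset.sum_mul]
      congr 1
      simp only [Finset.sum_ite_eq, Finset.mem_univ, if_true]
      exact hxx
    have e2 : ∑ q : (Fin d × Fin d) × (Fin d × Fin d),
        (if q.1.1 = q.2.1 then x q.1.1 * x q.2.1 else 0) * (if q.1.2 = q.2.2 then x q.1.2 * x q.2.2 else 0)
        = σ2 * σ2 := by
      simp only [Fintype.sum_prod_type]
      have inner : ∀ i j : Fin d,
          (∑ k, ∑ l, (if i = k then x i * x k else 0) * (if j = l then x j * x l else 0))
          = (x i * x i) * (x j * x j) := by
        intro i j
        rw [← Fintype.sum_mul_sum]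
        simp [Finset.sum_ite_eq]
      simp only [inner]
      rw [← Fintype.sum_mul_sum, hxx]
    have e3 : ∑ q : (Fin d × Fin d) × (Fin d × Fin d),
        (if q.1.1 = q.2.2 then x q.1.1 * x q.2.2 else 0) * (if q.1.2 = q.2.1 then x q.1.2 * x q.2.1 else 0)
        = σ2 * σ2 := by
      simp only [Fintype.sum_prod_type]
      have inner : ∀ i j : Fin d,
          (∑ k, ∑ l, (if i = l then x i * x l else 0) * (if j = k then x j * x k else 0))
          = (x j * x j) * (x i * x i) := by
        intro i j
        have hcomm : ∀ k l : Fin d, (if i = l then x i * x l else 0) * (if j = k then x j * x k else 0)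
            = (if j = k then x j * x k else 0) * (if i = l then x i * x l else 0) := fun k l => mul_comm _ _
        simp only [hcomm]
        rw [← Fintype.sum_mul_sum]
        simp [Finset.sum_ite_eq]
      simp only [inner]
      have hcomm2 : ∀ i j : Fin d, (x j * x j) * (x i * x i) = (x i * x i) * (x j * x j) :=
        fun i j => mul_comm _ _
      simp only [hcomm2]
      rw [← Fintype.sum_mul_sum, hxx]
    rw [e1, e2, e3]
    nlinarith [sq_nonneg σ2]
  -- integrability of S^2 and S^4
  have hB : ∀ᵐ ω ∂μ, |S ω| ≤ ∑ i, |x i| := by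
    filter_upwards [hae] with ω hω
    calc |S ω| ≤ ∑ i, |W ω i * x i| := Finset.abs_sum_le_sum_abs _ _
      _ = ∑ i, |x i| := by
          apply Finset.sum_congr rfl
          intro i _
          rw [abs_mul, hω i, one_mul]
  have hS2int : Integrable (fun ω => S ω ^ 2) μ := by
    apply Integrable.mono' (integrable_const ((∑ i, |x i|) ^ 2))
      ((hSmeas.pow_const 2).aestronglyMeasurable)
    filter_upwards [hB] with ω hω
    rw [Real.norm_eq_abs, abs_pow]
    exact pow_le_pow_left₀ (abs_nonneg _) hω 2
  have hS4int : Integrable (fun ω => S ω ^ 4) μ := by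
    apply Integrable.mono' (integrable_const ((∑ i, |x i|) ^ 4))
      ((hSmeas.pow_const 4).aestronglyMeasurable)
    filter_upwards [hB] with ω hω
    rw [Real.norm_eq_abs, abs_pow]
    exact pow_le_pow_left₀ (abs_nonneg _) hω 4
  -- Paley–Zygmund
  set A : Set Ω := {ω | σ2 / 2 ≤ S ω ^ 2} with hAdef
  have hAmeas : MeasurableSet A := measurableSet_le measurable_const (hSmeas.pow_const 2)
  have hL2 : ∫⁻ ω, ENNReal.ofReal (S ω ^ 2) ∂μ = ENNReal.ofReal σ2 := by
    rw [← ofReal_integral_eq_lintegral_ofReal hS2int (Filter.Eventually.of_forall fun ω => sq_nonneg _), hES2]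
  have hL4 : ∫⁻ ω, ENNReal.ofReal (S ω ^ 4) ∂μ ≤ ENNReal.ofReal (3 * σ2 ^ 2) := by
    rw [← ofReal_integral_eq_lintegral_ofReal hS4int
      (Filter.Eventually.of_forall fun ω => by positivity)]
    exact ENNReal.ofReal_le_ofReal hES4
  -- split the integral
  have hsplit : ∫⁻ ω, ENNReal.ofReal (S ω ^ 2) ∂μ
      = (∫⁻ ω in A, ENNReal.ofReal (S ω ^ 2) ∂μ) + ∫⁻ ω in Aᶜ, ENNReal.ofReal (S ω ^ 2) ∂μ :=
    (lintegral_add_compl _ hAmeas).symm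
  have hcompl : ∫⁻ ω in Aᶜ, ENNReal.ofReal (S ω ^ 2) ∂μ ≤ ENNReal.ofReal (σ2 / 2) := by
    calc ∫⁻ ω in Aᶜ, ENNReal.ofReal (S ω ^ 2) ∂μ
        ≤ ∫⁻ _ in Aᶜ, ENNReal.ofReal (σ2 / 2) ∂μ := by
          apply setLIntegral_mono measurable_const
          intro ω hω
          exact ENNReal.ofReal_le_ofReal (le_of_not_ge hω)
      _ = ENNReal.ofReal (σ2 / 2) * μ Aᶜ := by rw [setLIntegral_const]
      _ ≤ ENNReal.ofReal (σ2 / 2) * 1 := by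
          gcongr
          exact prob_le_one
      _ = ENNReal.ofReal (σ2 / 2) := mul_one _
  -- Cauchy–Schwarz on A
  have hCS : ∫⁻ ω in A, ENNReal.ofReal (S ω ^ 2) ∂μ
      ≤ (ENNReal.ofReal (3 * σ2 ^ 2)) ^ (1/2 : ℝ) * (μ A) ^ (1/2 : ℝ) := by
    set f : Ω → ENNReal := fun ω => ENNReal.ofReal (S ω ^ 2) with hfdef
    set g : Ω → ENNReal := A.indicator (fun _ => 1) with hgdef
    have hfmeas : Measurable f := by
      apply Measurable.ennreal_ofReal
      exact hSmeas.pow_const 2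
    have hgmeas : Measurable g := measurable_one.indicator hAmeas
    have hconj : Real.HolderConjugate 2 2 := ⟨by norm_num, by norm_num, by norm_num⟩
    have hcs := ENNReal.lintegral_mul_le_Lp_mul_Lq μ hconj hfmeas.aemeasurable hgmeas.aemeasurable
    have hind : ∫⁻ ω in A, ENNReal.ofReal (S ω ^ 2) ∂μ = ∫⁻ ω, (f * g) ω ∂μ := by
      rw [← lintegral_indicator hAmeas _]
      apply lintegral_congr
      intro ω
      by_cases hω : ω ∈ A
      · simp [hfdef, hgdef, Set.indicator_of_mem hω, Pi.mul_apply]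
      · simp [hfdef, hgdef, Set.indicator_of_notMem hω, Pi.mul_apply]
    rw [hind]
    refine le_trans hcs (mul_le_mul' ?_ ?_)
    · refine ENNReal.rpow_le_rpow ?_ (by norm_num)
      refine le_trans (le_of_eq ?_) hL4
      apply lintegral_congr
      intro ω
      rw [hfdef]
      rw [show ((2:ℝ)) = ((2:ℕ):ℝ) by norm_num, ENNReal.rpow_natCast,
        ← ENNReal.ofReal_pow (sq_nonneg _)]
      norm_num
      ring_nf
    · refine ENNReal.rpow_le_rpow ?_ (by norm_num)
      refine le_of_eq ?_
      have hpt : ∀ ω, (g ω) ^ (2:ℝ) = g ω := by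
        intro ω
        rw [hgdef]
        by_cases hω : ω ∈ A
        · simp [Set.indicator_of_mem hω]
        · simp [Set.indicator_of_notMem hω, ENNReal.zero_rpow_of_pos]
      rw [lintegral_congr hpt, hgdef, lintegral_indicator hAmeas _]
      simp
  -- combine
  have hhalf : ENNReal.ofReal (σ2 / 2) ≤ (ENNReal.ofReal (3 * σ2 ^ 2)) ^ (1/2 : ℝ) * (μ A) ^ (1/2 : ℝ) := by
    have h1 : ENNReal.ofReal σ2 = ENNReal.ofReal (σ2 / 2) + ENNReal.ofReal (σ2 / 2) := by
      rw [← ENNReal.ofReal_add (by positivity) (by positivity)]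
      norm_num
    have h2 := hL2.symm.le.trans (hsplit.le.trans (add_le_add hCS hcompl))
    rw [h1] at h2
    exact (ENNReal.add_le_add_iff_right ENNReal.ofReal_ne_top).mp h2
  have hsq : ENNReal.ofReal (σ2 / 2) ^ 2 ≤ ENNReal.ofReal (3 * σ2 ^ 2) * μ A := by
    calc ENNReal.ofReal (σ2 / 2) ^ 2
        ≤ ((ENNReal.ofReal (3 * σ2 ^ 2)) ^ (1/2 : ℝ) * (μ A) ^ (1/2 : ℝ)) ^ 2 := by
          exact pow_le_pow_left' hhalf 2
      _ = ENNReal.ofReal (3 * σ2 ^ 2) * μ A := by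
          rw [mul_pow, ← ENNReal.rpow_natCast (_ ^ (1/2:ℝ)) 2, ← ENNReal.rpow_natCast ((μ A) ^ (1/2:ℝ)) 2,
            ← ENNReal.rpow_mul, ← ENNReal.rpow_mul]
          norm_num
  -- finish
  have h3pos : (0:ℝ) < 3 * σ2 ^ 2 := by positivity
  have hne0 : ENNReal.ofReal (3 * σ2 ^ 2) ≠ 0 := by
    simp [ENNReal.ofReal_eq_zero, not_le, h3pos, hσpos.ne']
  have hnetop : ENNReal.ofReal (3 * σ2 ^ 2) ≠ ⊤ := ENNReal.ofReal_ne_top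
  have hkey : ENNReal.ofReal (3 * σ2 ^ 2) * (1/28 : ENNReal) ≤ ENNReal.ofReal (3 * σ2 ^ 2) * μ A := by
    calc ENNReal.ofReal (3 * σ2 ^ 2) * (1/28 : ENNReal)
        = ENNReal.ofReal (3 * σ2 ^ 2) * ENNReal.ofReal (1/28) := by
          congr 1
          rw [ENNReal.ofReal_div_of_pos (by norm_num)]
          norm_num
      _ = ENNReal.ofReal ((3 * σ2 ^ 2) * (1/28)) := by
          rw [ENNReal.ofReal_mul h3pos.le]
      _ ≤ ENNReal.ofReal ((σ2 / 2) ^ 2) := by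
          apply ENNReal.ofReal_le_ofReal
          nlinarith [sq_nonneg σ2]
      _ = ENNReal.ofReal (σ2 / 2) ^ 2 := by
          rw [ENNReal.ofReal_pow (by positivity)]
      _ ≤ ENNReal.ofReal (3 * σ2 ^ 2) * μ A := hsq
  exact (ENNReal.mul_le_mul_iff_right hne0 hnetop).mp hkey
end

section
/- Suppose a distributed test has acceptance structure: sets A₁,…,A_L partitioning 𝒳ⁿ and sets B₁,…,B_L ⊆ 𝒴ⁿ such that ∑ᵢ P_{XY}(Aᵢ × Bᵢ) ≥ 1-δ and ∑ᵢ P_X(Aᵢ)·P_Y(Bᵢ) ≤ ε, where (X,Y) (n-fold product) satisfies the hypercontractive rectangle bound P_{XY}(A×B) ≤ P_X(A)^{1/p'} P_Y(B)^{1/q} for all measurable A, B, with 1 ≤ p' ≤ q ≤ p and p' = p/(p-1). Then 1-δ ≤ ε^{1/q}·L^{1/p}. -/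
open MeasureTheory

/-- Lower bound via hypercontractivity: if the joint distribution satisfies the
hypercontractive rectangle bound `P_{XY}(A×B) ≤ P_X(A)^{1/p'} P_Y(B)^{1/q}` with
`1 ≤ p' ≤ q ≤ p`, `p' = p/(p-1)`, and sets `A₁,…,A_L` partition `𝒳ⁿ`, `B₁,…,B_L ⊆ 𝒴ⁿ`
with `∑ᵢ P_{XY}(Aᵢ×Bᵢ) ≥ 1-δ` and `∑ᵢ P_X(Aᵢ)P_Y(Bᵢ) ≤ ε`, then `1-δ ≤ ε^{1/q}·L^{1/p}`. -/
theorem hypercontractivity_lower_bound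
    {𝒳 𝒴 : Type*} [MeasurableSpace 𝒳] [MeasurableSpace 𝒴]
    (μXY : Measure (𝒳 × 𝒴)) [IsProbabilityMeasure μXY]
    (μX : Measure 𝒳) [IsProbabilityMeasure μX]
    (μY : Measure 𝒴) [IsProbabilityMeasure μY]
    (p q : ℝ) (hp'1 : 1 ≤ p / (p - 1)) (hp'q : p / (p - 1) ≤ q) (hqp : q ≤ p)
    (hrect : ∀ (A : Set 𝒳) (B : Set 𝒴), MeasurableSet A → MeasurableSet B →
        (μXY (A ×ˢ B)).toReal ≤ (μX A).toReal ^ (1 - 1 / p) * (μY B).toReal ^ (1 / q))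
    (L : ℕ) (A : Fin L → Set 𝒳) (B : Fin L → Set 𝒴)
    (hA : ∀ i, MeasurableSet (A i)) (hB : ∀ i, MeasurableSet (B i))
    (hpart : ∀ x : 𝒳, ∃! i, x ∈ A i)
    (δ ε : ℝ)
    (h1 : 1 - δ ≤ ∑ i, (μXY ((A i) ×ˢ (B i))).toReal)
    (h2 : ∑ i, (μX (A i)).toReal * (μY (B i)).toReal ≤ ε) :
    1 - δ ≤ ε ^ (1 / q) * (L : ℝ) ^ (1 / p) := by
  -- Basic exponent facts
  have hp1 : 1 < p := by
    rcases lt_trichotomy p 1 with h | h | h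
    · have hneg : p - 1 < 0 := by linarith
      rw [le_div_iff_of_neg hneg, one_mul] at hp'1
      linarith
    · rw [h] at hp'1; norm_num at hp'1
    · exact h
  have hpm : (0:ℝ) < p - 1 := by linarith
  have hp0 : (0:ℝ) < p := by linarith
  have hq1 : 1 < q := lt_of_lt_of_le ((one_lt_div hpm).mpr (by linarith)) hp'q
  have hq0 : (0:ℝ) < q := by linarith
  have hqm : (0:ℝ) < q - 1 := by linarith
  set s : ℝ := 1 - 1/p - 1/q with hs
  have hs0 : 0 ≤ s := by
    have h1q : 1/q ≤ (p-1)/p := by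
      rw [div_le_div_iff₀ hq0 hp0]
      rw [div_le_iff₀ hpm] at hp'q
      linarith
    have hp' : (1:ℝ) - 1/p = (p-1)/p := by field_simp
    simp only [hs]; linarith
  set q' : ℝ := q / (q - 1) with hq'
  have hq'0 : (0:ℝ) < q' := div_pos hq0 hqm
  set θ : ℝ := s * q' with hθ
  have hθ0 : 0 ≤ θ := mul_nonneg hs0 hq'0.le
  have hθeq : θ = 1 - q'/p := by
    simp only [hθ, hq', hs]; field_simp; ring
  have hθ1 : θ ≤ 1 := by
    rw [hθeq]
    have : 0 ≤ q'/p := div_nonneg hq'0.le hp0.le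
    linarith
  have hid : (1 - θ) * (1/q') = 1/p := by
    rw [hθeq]
    have : 1 - (1 - q'/p) = q'/p := by ring
    rw [this]
    field_simp
  -- abbreviations
  set a : Fin L → ℝ := fun i => (μX (A i)).toReal with ha_def
  set b : Fin L → ℝ := fun i => (μY (B i)).toReal with hb_def
  have ha : ∀ i, 0 ≤ a i := fun i => ENNReal.toReal_nonneg
  have hb : ∀ i, 0 ≤ b i := fun i => ENNReal.toReal_nonneg
  -- the A i partition, so the a i sum to 1
  have hdisj : Pairwise (Function.onFun Disjoint A) := by
    intro i j hij
    rw [Function.onFun, Set.disjoint_left]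
    intro x hxi hxj
    obtain ⟨k, _, hk⟩ := hpart x
    exact hij ((hk i hxi).trans (hk j hxj).symm)
  have hUnion : (⋃ i, A i) = Set.univ := Set.eq_univ_of_forall fun x => by
    obtain ⟨i, hi, _⟩ := hpart x
    exact Set.mem_iUnion.mpr ⟨i, hi⟩
  have hsumE : ∑ i, μX (A i) = 1 := by
    rw [← tsum_fintype (L := SummationFilter.unconditional _), ← measure_iUnion hdisj hA, hUnion, measure_univ]
  have hsum : ∑ i, a i = 1 := by
    simp only [ha_def]
    rw [← ENNReal.toReal_sum (fun i _ => measure_ne_top μX (A i)), hsumE, ENNReal.toReal_one]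
  have hε : 0 ≤ ε := le_trans (Finset.sum_nonneg fun i _ => mul_nonneg (ha i) (hb i)) h2
  -- Step 1: rectangle bound
  have step1 : 1 - δ ≤ ∑ i, a i ^ (1 - 1/p) * b i ^ (1/q) :=
    h1.trans (Finset.sum_le_sum fun i _ => hrect _ _ (hA i) (hB i))
  -- rewrite each term
  have hterm : ∀ i, a i ^ (1 - 1/p) * b i ^ (1/q) = (a i * b i) ^ (1/q) * a i ^ s := by
    intro i
    rw [Real.mul_rpow (ha i) (hb i)]
    have h1p : (1:ℝ) - 1/p = 1/q + s := by simp only [hs]; ring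
    have h1p0 : (0:ℝ) < 1 - 1/p := by
      rw [sub_pos]; exact (div_lt_one hp0).mpr hp1
    rw [h1p, Real.rpow_add' (ha i) (by rw [← h1p]; exact h1p0.ne')]
    ring
  -- Hölder with exponents q, q'
  have hconj : Real.HolderConjugate q q' := by
    exact (Real.holderConjugate_iff_eq_conjExponent hq1).mpr hq'
  have holder : ∑ i, (a i * b i) ^ (1/q) * a i ^ s ≤
      (∑ i, ((a i * b i) ^ (1/q)) ^ q) ^ (1/q) * (∑ i, (a i ^ s) ^ q') ^ (1/q') :=
    Real.inner_le_Lp_mul_Lq_of_nonneg Finset.univ hconj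
      (fun i _ => Real.rpow_nonneg (mul_nonneg (ha i) (hb i)) _)
      (fun i _ => Real.rpow_nonneg (ha i) _)
  have hrw1 : ∀ i, ((a i * b i) ^ (1/q)) ^ q = a i * b i := by
    intro i
    rw [← Real.rpow_mul (mul_nonneg (ha i) (hb i)), one_div,
      inv_mul_cancel₀ hq0.ne', Real.rpow_one]
  have hrw2 : ∀ i, (a i ^ s) ^ q' = a i ^ θ := by
    intro i
    rw [← Real.rpow_mul (ha i)]
  rw [show (∑ i, ((a i * b i) ^ (1/q)) ^ q) = ∑ i, a i * b i from
        Finset.sum_congr rfl fun i _ => hrw1 i,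
      show (∑ i, (a i ^ s) ^ q') = ∑ i, a i ^ θ from
        Finset.sum_congr rfl fun i _ => hrw2 i] at holder
  -- Step 3: ∑ a^θ ≤ L^(1-θ)
  have step3 : ∑ i, a i ^ θ ≤ (L:ℝ) ^ (1 - θ) := by
    rcases eq_or_lt_of_le hθ0 with h0 | h0
    · simp only [← h0, Real.rpow_zero, sub_zero, Real.rpow_one]
      simp
    · have hP : 1 ≤ θ⁻¹ := (one_le_inv₀ h0).mpr hθ1
      have key := Real.inner_le_weight_mul_Lp_of_nonneg Finset.univ hP
        (fun _ => (1:ℝ)) (fun i => a i ^ θ) (fun _ => zero_le_one)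
        (fun i => Real.rpow_nonneg (ha i) θ)
      simp only [one_mul, inv_inv] at key
      have : ∀ i, (a i ^ θ) ^ θ⁻¹ = a i := by
        intro i
        rw [← Real.rpow_mul (ha i), mul_inv_cancel₀ h0.ne', Real.rpow_one]
      rw [show (∑ i, (a i ^ θ) ^ θ⁻¹) = ∑ i, a i from
            Finset.sum_congr rfl fun i _ => this i, hsum, Real.one_rpow, mul_one] at key
      simpa using key
  -- combine
  calc 1 - δ ≤ ∑ i, (a i * b i) ^ (1/q) * a i ^ s := by
        rw [show (∑ i, (a i * b i) ^ (1/q) * a i ^ s) = ∑ i, a i ^ (1 - 1/p) * b i ^ (1/q) from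
          Finset.sum_congr rfl fun i _ => (hterm i).symm]
        exact step1
    _ ≤ (∑ i, a i * b i) ^ (1/q) * (∑ i, a i ^ θ) ^ (1/q') := holder
    _ ≤ ε ^ (1/q) * ((L:ℝ) ^ (1 - θ)) ^ (1/q') := by
        apply mul_le_mul
        · exact Real.rpow_le_rpow (Finset.sum_nonneg fun i _ => mul_nonneg (ha i) (hb i)) h2
            (by positivity)
        · exact Real.rpow_le_rpow (Finset.sum_nonneg fun i _ => Real.rpow_nonneg (ha i) θ)
            step3 (by positivity)
        · exact Real.rpow_nonneg (Finset.sum_nonneg fun i _ => Real.rpow_nonneg (ha i) θ) _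
        · exact Real.rpow_nonneg hε _
    _ = ε ^ (1/q) * (L:ℝ) ^ (1/p) := by
        rw [← Real.rpow_mul (Nat.cast_nonneg L), hid]
end

section
/- For ξ ∈ (0, 1-τ²] with τ ∈ (0,1), the function F(w) = (1+w)/(1+τ²w) − ξ(1+w) over w ≥ 0 attains its maximum at w* = (1/τ²)(√((1-τ²)/ξ) − 1), and the maximum value satisfies F(w*)·log(1/ε) = (1/τ²)·(√(log(1/ε)) − √((1-τ²)·log(1/(1-δ))))² when ξ = log(1-δ)/log(ε) (with δ,ε such that ξ ∈ (0, 1-τ²]). -/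
private lemma hyper_aux_le (t ξ s u : ℝ) (ht0 : 0 < t) (hs0 : 0 < s) (hu : 0 < u)
    (hξ0 : 0 < ξ) (hsξ : ξ * s ^ 2 = 1 - t) :
    (1 + 1/t*(u-1))/u - ξ*(1 + 1/t*(u-1)) ≤ (1 + 1/t*(s-1))/s - ξ*(1 + 1/t*(s-1)) := by
  have key : (1 + 1/t*(s-1))/s - ξ*(1 + 1/t*(s-1)) - ((1 + 1/t*(u-1))/u - ξ*(1 + 1/t*(u-1)))
      = ξ*(u - s)^2/(t*u) := by
    field_simp
    ring_nf
    linear_combination (u-s) * hsξ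
  have hpos : 0 ≤ ξ*(u - s)^2/(t*u) := by positivity
  linarith

private lemma hyper_aux_val (t ξ s : ℝ) (ht0 : 0 < t) (hs0 : 0 < s)
    (hsξ : ξ * s ^ 2 = 1 - t) :
    (1 + 1/t*(s-1))/s - ξ*(1 + 1/t*(s-1)) = (1/t)*(1 - ξ*s)^2 := by
  field_simp
  ring_nf
  linear_combination (1 - s*ξ) * hsξ

/-- Optimization step for the hypercontractivity lower bound: for `ξ ∈ (0, 1-τ²]`,
`F(w) = (1+w)/(1+τ²w) − ξ(1+w)` is maximized over `w ≥ 0` at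
`w* = (1/τ²)(√((1-τ²)/ξ) − 1)`, and with `ξ = log(1-δ)/log ε` the maximum satisfies
`F(w*)·log(1/ε) = (1/τ²)(√(log(1/ε)) − √((1-τ²)log(1/(1-δ))))²`. -/
theorem hypercontractivity_optimization
    (τ δ ε : ℝ) (hτ : τ ∈ Set.Ioo (0:ℝ) 1)
    (hδ : δ ∈ Set.Ioo (0:ℝ) 1) (hε : ε ∈ Set.Ioo (0:ℝ) 1)
    (ξ : ℝ) (hξdef : ξ = Real.logb 2 (1 - δ) / Real.logb 2 ε)
    (hξ : ξ ∈ Set.Ioc (0:ℝ) (1 - τ ^ 2))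
    (F : ℝ → ℝ) (hF : ∀ w, F w = (1 + w) / (1 + τ ^ 2 * w) - ξ * (1 + w))
    (wstar : ℝ) (hw : wstar = (1 / τ ^ 2) * (Real.sqrt ((1 - τ ^ 2) / ξ) - 1)) :
    0 ≤ wstar
    ∧ (∀ w, 0 ≤ w → F w ≤ F wstar)
    ∧ F wstar * Real.logb 2 (1 / ε)
        = (1 / τ ^ 2) * (Real.sqrt (Real.logb 2 (1 / ε))
            - Real.sqrt ((1 - τ ^ 2) * Real.logb 2 (1 / (1 - δ)))) ^ 2 := by
  obtain ⟨hτ0, hτ1⟩ := hτ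
  obtain ⟨hδ0, hδ1⟩ := hδ
  obtain ⟨hε0, hε1⟩ := hε
  obtain ⟨hξ0, hξle⟩ := hξ
  set t : ℝ := τ ^ 2 with hT
  have ht0 : 0 < t := by positivity
  have ht1 : t < 1 := by nlinarith
  set s : ℝ := Real.sqrt ((1 - t) / ξ) with hs
  have hs2 : s ^ 2 = (1 - t) / ξ := Real.sq_sqrt (div_nonneg (by linarith) hξ0.le)
  have hs1 : (1:ℝ) ≤ s := by
    have h1 : (1:ℝ) ≤ (1 - t) / ξ := (one_le_div hξ0).mpr (by linarith)
    calc (1:ℝ) = Real.sqrt 1 := Real.sqrt_one.symm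
      _ ≤ s := Real.sqrt_le_sqrt h1
  have hs0 : (0:ℝ) < s := by linarith
  have hsξ : ξ * s ^ 2 = 1 - t := by rw [hs2]; field_simp
  have hw0 : 0 ≤ wstar := by
    rw [hw]
    have h1 : (0:ℝ) ≤ s - 1 := by linarith
    positivity
  have hFstar : F wstar = (1 + 1/t*(s-1))/s - ξ*(1 + 1/t*(s-1)) := by
    rw [hF, hw]
    have hts : 1 + t * (1 / t * (s - 1)) = s := by field_simp; ring
    rw [hts]
  refine ⟨hw0, ?_, ?_⟩
  · intro w hww
    have hu : (0:ℝ) < 1 + t * w := by nlinarith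
    have h := hyper_aux_le t ξ s (1 + t * w) ht0 hs0 hu hξ0 hsξ
    have hwu : 1/t*((1 + t*w) - 1) = w := by field_simp; ring
    rw [hwu] at h
    rw [hF, hFstar]
    exact h
  · have key1 : F wstar = (1/t) * (1 - ξ*s)^2 := by
      rw [hFstar]; exact hyper_aux_val t ξ s ht0 hs0 hsξ
    set L : ℝ := Real.logb 2 (1 / ε) with hLdef
    set M : ℝ := Real.logb 2 (1 / (1 - δ)) with hMdef
    have hL : 0 < L := Real.logb_pos (by norm_num) (by rw [lt_div_iff₀ hε0]; linarith)
    have hM : 0 < M := Real.logb_pos (by norm_num)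
      (by rw [lt_div_iff₀ (by linarith : (0:ℝ) < 1 - δ)]; linarith)
    have hLneg : Real.logb 2 ε = -L := by rw [hLdef, one_div, Real.logb_inv, neg_neg]
    have hMneg : Real.logb 2 (1 - δ) = -M := by rw [hMdef, one_div, Real.logb_inv, neg_neg]
    have hξM : ξ * L = M := by
      rw [hξdef, hLneg, hMneg]; field_simp
    have key2 : Real.sqrt ((1 - t) * M) = ξ * s * Real.sqrt L := by
      rw [show (1 - t) * M = (ξ * s) ^ 2 * L by
        linear_combination (-(ξ*L)) * hsξ + (-(1-t)) * hξM]
      rw [Real.sqrt_mul (sq_nonneg _), Real.sqrt_sq (by positivity)]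
    rw [key1, key2]
    have hsq : Real.sqrt L ^ 2 = L := Real.sq_sqrt hL.le
    linear_combination (-(1/t) * (1 - ξ*s)^2) * hsq
end
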